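/- Let V₀, V₁, V₂, V₃, T, T' be real vector spaces, let d₀ : V₀ → V₁, d₁ : V₁ → V₂, d₂ : V₂ → V₃, G : V₂ → T, L' : V₂ → T' be linear maps with d₁ ∘ d₀ = 0, d₂ ∘ d₁ = 0 and L' ∘ d₁ = 0, let c be a nonzero real number, and set L := c • (G ∘ d₁) : V₁ → T. Then the sequence 0 → ker d₁ ⧸ range d₀ → ker L ⧸ range d₀ → (ker L' ⊓ ker G) → ker L' ⧸ range d₁ is exact, where the first map is induced by the inclusion ker d₁ ⊆ ker L, the second sends the class of u to d₁ u (which lies in ker L' ⊓ ker G), and the third sends w to its class modulo range d₁. -/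

import Mathlib

/-- Remark after Proposition 2.5 of Branson–Gover: the canonical exact sequence
`0 → H^{k-1}(M) → H^{k-1}_L(M) → ℋ^k_𝕃 → H^k_L(M)`, where `ℋ^k_𝕃` is the joint
null space of `L'` (modelling `L_k`) and `G` (modelling `G_k`), and
`L = c • (G ∘ d₁)` encodes `(n−2k+4) G_k ∘ d = L_{k-1}`. -/
theorem stmt_5
    {V₀ V₁ V₂ V₃ T T' : Type*}
    [AddCommGroup V₀] [Module ℝ V₀] [AddCommGroup V₁] [Module ℝ V₁]
    [AddCommGroup V₂] [Module ℝ V₂] [AddCommGroup V₃] [Module ℝ V₃]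
    [AddCommGroup T] [Module ℝ T] [AddCommGroup T'] [Module ℝ T']
    (d₀ : V₀ →ₗ[ℝ] V₁) (d₁ : V₁ →ₗ[ℝ] V₂) (d₂ : V₂ →ₗ[ℝ] V₃)
    (G : V₂ →ₗ[ℝ] T) (L' : V₂ →ₗ[ℝ] T')
    (h₁₀ : d₁ ∘ₗ d₀ = 0) (h₂₁ : d₂ ∘ₗ d₁ = 0) (hL' : L' ∘ₗ d₁ = 0)
    (c : ℝ) (hc : c ≠ 0)
    (L : V₁ →ₗ[ℝ] T) (hL : L = c • (G ∘ₗ d₁)) :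
    ∃ (hkk : LinearMap.ker d₁ ≤ LinearMap.ker L)
      (_ : ∀ u ∈ LinearMap.ker L, d₁ u ∈ LinearMap.ker L' ⊓ LinearMap.ker G)
      (i : (↥(LinearMap.ker d₁) ⧸
              (LinearMap.range d₀).comap (LinearMap.ker d₁).subtype) →ₗ[ℝ]
           (↥(LinearMap.ker L) ⧸
              (LinearMap.range d₀).comap (LinearMap.ker L).subtype))
      (j : (↥(LinearMap.ker L) ⧸
              (LinearMap.range d₀).comap (LinearMap.ker L).subtype) →ₗ[ℝ]
           ↥(LinearMap.ker L' ⊓ LinearMap.ker G))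
      (k : ↥(LinearMap.ker L' ⊓ LinearMap.ker G) →ₗ[ℝ]
           (↥(LinearMap.ker L') ⧸
              (LinearMap.range d₁).comap (LinearMap.ker L').subtype)),
      (∀ (u : V₁) (hu : u ∈ LinearMap.ker d₁),
          i (Submodule.Quotient.mk ⟨u, hu⟩) = Submodule.Quotient.mk ⟨u, hkk hu⟩) ∧
      (∀ (u : V₁) (hu : u ∈ LinearMap.ker L),
          (j (Submodule.Quotient.mk ⟨u, hu⟩) : V₂) = d₁ u) ∧
      (∀ w : ↥(LinearMap.ker L' ⊓ LinearMap.ker G),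
          k w = Submodule.Quotient.mk ⟨(w : V₂), (Submodule.mem_inf.mp w.2).1⟩) ∧
      Function.Injective i ∧
      LinearMap.ker j = LinearMap.range i ∧
      LinearMap.ker k = LinearMap.range j := by
  have hLmem : ∀ u : V₁, u ∈ LinearMap.ker L ↔ G (d₁ u) = 0 := by
    intro u
    simp [hL, LinearMap.mem_ker, smul_eq_zero, hc]
  have hkk : LinearMap.ker d₁ ≤ LinearMap.ker L := by
    intro u hu
    rw [hLmem]
    rw [LinearMap.mem_ker] at hu
    simp [hu]
  have hmem : ∀ u ∈ LinearMap.ker L, d₁ u ∈ LinearMap.ker L' ⊓ LinearMap.ker G := by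
    intro u hu
    refine Submodule.mem_inf.mpr ⟨?_, ?_⟩
    · exact LinearMap.congr_fun hL' u
    · exact (hLmem u).mp hu
  set A := (LinearMap.range d₀).comap (LinearMap.ker d₁).subtype with hA
  set B := (LinearMap.range d₀).comap (LinearMap.ker L).subtype with hB
  set C := (LinearMap.range d₁).comap (LinearMap.ker L').subtype with hC
  have hAB : A ≤ B.comap (Submodule.inclusion hkk) := by
    intro x hx
    simpa [hA, hB, Submodule.mem_comap] using hx
  let i := Submodule.mapQ A B (Submodule.inclusion hkk) hAB
  let j₀ : ↥(LinearMap.ker L) →ₗ[ℝ] ↥(LinearMap.ker L' ⊓ LinearMap.ker G) :=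
    LinearMap.codRestrict _ (d₁ ∘ₗ (LinearMap.ker L).subtype) (fun u => hmem u u.2)
  have hBj : B ≤ LinearMap.ker j₀ := by
    intro x hx
    rw [hB, Submodule.mem_comap] at hx
    obtain ⟨v, hv⟩ := hx
    rw [LinearMap.mem_ker]
    apply Subtype.ext
    have h0 : d₁ (d₀ v) = 0 := LinearMap.congr_fun h₁₀ v
    have hx' : (x : V₁) = d₀ v := hv.symm
    show d₁ (x : V₁) = 0
    simp [hx', h0]
  let j := Submodule.liftQ B j₀ hBj
  let k := C.mkQ ∘ₗ Submodule.inclusion (inf_le_left :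
    LinearMap.ker L' ⊓ LinearMap.ker G ≤ LinearMap.ker L')
  refine ⟨hkk, hmem, i, j, k, ?_, ?_, ?_, ?_, ?_, ?_⟩
  · intro u hu
    rw [Submodule.mapQ_apply]
    exact congrArg Submodule.Quotient.mk (Subtype.ext rfl)
  · intro u hu
    rfl
  · intro w
    rfl
  · rw [← LinearMap.ker_eq_bot]
    rw [Submodule.eq_bot_iff]
    intro x hx
    obtain ⟨a, rfl⟩ := Submodule.Quotient.mk_surjective A x
    rw [LinearMap.mem_ker] at hx
    have : Submodule.Quotient.mk (Submodule.inclusion hkk a) = (0 : _ ⧸ B) := by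
      simpa [i, Submodule.mapQ_apply] using hx
    rw [Submodule.Quotient.mk_eq_zero] at this
    rw [Submodule.Quotient.mk_eq_zero]
    exact hAB this
  · ext x
    obtain ⟨a, rfl⟩ := Submodule.Quotient.mk_surjective B x
    simp only [LinearMap.mem_ker, LinearMap.mem_range]
    constructor
    · intro h
      have hd : d₁ (a : V₁) = 0 := by
        have := congrArg (Subtype.val) h
        exact this
      refine ⟨Submodule.Quotient.mk ⟨(a : V₁), hd⟩, ?_⟩
      rw [Submodule.mapQ_apply]
      exact congrArg Submodule.Quotient.mk (Subtype.ext rfl)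
    · rintro ⟨y, hy⟩
      obtain ⟨b, rfl⟩ := Submodule.Quotient.mk_surjective A y
      rw [← hy]
      apply Subtype.ext
      have hd : d₁ (b : V₁) = 0 := b.2
      exact hd
  · ext w
    simp only [LinearMap.mem_ker, LinearMap.mem_range]
    constructor
    · intro h
      have hw : (⟨(w : V₂), (Submodule.mem_inf.mp w.2).1⟩ :
          ↥(LinearMap.ker L')) ∈ C := by
        rw [← Submodule.Quotient.mk_eq_zero]
        exact h
      rw [hC, Submodule.mem_comap] at hw
      obtain ⟨u, hu⟩ := hw
      have huL : u ∈ LinearMap.ker L := by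
        rw [hLmem]
        have hwG : G (w : V₂) = 0 := (Submodule.mem_inf.mp w.2).2
        rw [show d₁ u = (w : V₂) from hu, hwG]
      refine ⟨Submodule.Quotient.mk ⟨u, huL⟩, ?_⟩
      apply Subtype.ext
      exact hu
    · rintro ⟨y, rfl⟩
      obtain ⟨b, rfl⟩ := Submodule.Quotient.mk_surjective B y
      show Submodule.Quotient.mk _ = (0 : _ ⧸ C)
      rw [Submodule.Quotient.mk_eq_zero, hC, Submodule.mem_comap]
      exact ⟨(b : V₁), rfl⟩
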